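/- Let (X, Y) be a random vector in ℝ² whose marginal distribution functions F and G are absolutely continuous, with joint distribution function F^{X,Y}, and let (X_1,Y_1), (X_2,Y_2), (X_3,Y_3) be i.i.d. copies of (X,Y). Then E[|F(X_1)−F(X_2)|·|G(Y_1)−G(Y_2)|] + E|F(X_1)−F(X_2)| · E|G(Y_1)−G(Y_2)| − 2·E[|F(X_1)−F(X_2)|·|G(Y_1)−G(Y_3)|] = 4 ∫∫ (F^{X,Y}(x,y) − F(x)G(y))² dF(x) dG(y), where the integral on the right is taken with respect to the product of the marginal laws of X and Y. In other words, one quarter of the population rank distance covariance of (X,Y) equals the modified Hoeffding functional ∫ (F^{X,Y} − F G)² dF dG. -/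

import Mathlib

open MeasureTheory ProbabilityTheory Filter Topology
open scoped ENNReal NNReal

noncomputable section

namespace Stmt9Aux

/-- indicator of `x ≤ s` -/
def eI (x s : ℝ) : ℝ := if x ≤ s then 1 else 0

lemma eI_meas {α : Type*} [MeasurableSpace α] {f g : α → ℝ} (hf : Measurable f)
    (hg : Measurable g) : Measurable (fun a => eI (f a) (g a)) :=
  Measurable.ite (measurableSet_le hf hg) measurable_const measurable_const

lemma eI_meas_id (x : ℝ) : Measurable (fun s : ℝ => eI x s) :=
  eI_meas measurable_const measurable_id

lemma eI_unit (x s : ℝ) : 0 ≤ eI x s ∧ eI x s ≤ 1 := by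
  unfold eI; split_ifs <;> norm_num

lemma unit_mul {a b : ℝ} (ha : 0 ≤ a ∧ a ≤ 1) (hb : 0 ≤ b ∧ b ≤ 1) :
    0 ≤ a * b ∧ a * b ≤ 1 :=
  ⟨mul_nonneg ha.1 hb.1, mul_le_one₀ ha.2 hb.1 hb.2⟩

lemma unit_one_sub {a : ℝ} (ha : 0 ≤ a ∧ a ≤ 1) : 0 ≤ 1 - a ∧ 1 - a ≤ 1 :=
  ⟨by linarith [ha.2], by linarith [ha.1]⟩

lemma unit_abs {a : ℝ} (ha : 0 ≤ a ∧ a ≤ 1) : |a| ≤ 1 :=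
  abs_le.2 ⟨by linarith [ha.1], ha.2⟩

lemma int_of_bdd {α : Type*} [MeasurableSpace α] {Q : Measure α} [IsFiniteMeasure Q]
    {f : α → ℝ} (hf : Measurable f) (C : ℝ) (h : ∀ a, |f a| ≤ C) : Integrable f Q :=
  Integrable.mono' (integrable_const C) hf.aestronglyMeasurable
    (ae_of_all _ fun a => by simpa using h a)

open Classical in
lemma integral_ite {α : Type*} [MeasurableSpace α] (Q : Measure α) {s : Set α}
    (hs : MeasurableSet s) :
    ∫ a, (if a ∈ s then (1 : ℝ) else 0) ∂Q = (Q s).toReal := by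
  have h1 : (fun a => if a ∈ s then (1 : ℝ) else 0) = s.indicator (fun _ => (1 : ℝ)) := by
    ext a; by_cases h : a ∈ s <;> simp [Set.indicator_apply, h]
  rw [h1]
  exact integral_indicator_one hs

/-- the key kernel -/
def DI (x s t : ℝ) : ℝ := eI x s + eI x t - 2 * (eI x s * eI x t)

lemma DI_meas {α : Type*} [MeasurableSpace α] {fx fs ft : α → ℝ} (h1 : Measurable fx)
    (h2 : Measurable fs) (h3 : Measurable ft) :
    Measurable (fun a => DI (fx a) (fs a) (ft a)) :=
  ((eI_meas h1 h2).add (eI_meas h1 h3)).sub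
    (measurable_const.mul ((eI_meas h1 h2).mul (eI_meas h1 h3)))

lemma DI_unit (x s t : ℝ) : 0 ≤ DI x s t ∧ DI x s t ≤ 1 := by
  unfold DI eI; split_ifs <;> norm_num

end Stmt9Aux

namespace Stmt9Aux

lemma eI_integrable {α : Type*} [MeasurableSpace α] (Q : Measure α) [IsFiniteMeasure Q]
    {f g : α → ℝ} (hf : Measurable f) (hg : Measurable g) :
    Integrable (fun a => eI (f a) (g a)) Q :=
  int_of_bdd (eI_meas hf hg) 1 (fun a => unit_abs (eI_unit _ _))

lemma integral_eI_Iic (μ : Measure ℝ) [IsProbabilityMeasure μ] (t : ℝ) :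
    ∫ x, eI x t ∂μ = (μ (Set.Iic t)).toReal := by
  have h : (fun x => eI x t) = fun x => if x ∈ Set.Iic t then (1 : ℝ) else 0 := by
    ext x; by_cases hc : x ≤ t <;> simp [eI, Set.mem_Iic, hc]
  rw [h]; convert integral_ite μ (measurableSet_Iic (a := t))

lemma abs_cdf (μ : Measure ℝ) [IsProbabilityMeasure μ] (F : ℝ → ℝ)
    (hF : ∀ x, F x = (μ (Set.Iic x)).toReal) (s t : ℝ) :
    |F s - F t| = ∫ x, DI x s t ∂μ := by
  have key : ∀ s t : ℝ, s ≤ t → |F s - F t| = ∫ x, DI x s t ∂μ := by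
    intro s t hst
    have hFm : F s ≤ F t := by
      rw [hF, hF]
      exact ENNReal.toReal_mono (measure_ne_top μ _)
        (measure_mono (Set.Iic_subset_Iic.2 hst))
    have hpt : (fun x => DI x s t) = fun x => eI x t - eI x s := by
      ext x; unfold DI eI
      rcases le_or_gt x s with h1 | h1
      · rw [if_pos h1, if_pos (h1.trans hst)]; ring
      · rw [if_neg (not_le.2 h1)]; ring
    have i1 : Integrable (fun x : ℝ => eI x t) μ :=
      eI_integrable μ measurable_id measurable_const
    have i2 : Integrable (fun x : ℝ => eI x s) μ :=
      eI_integrable μ measurable_id measurable_const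
    rw [abs_sub_comm, abs_of_nonneg (sub_nonneg.2 hFm), hpt, integral_sub i1 i2,
      integral_eI_Iic, integral_eI_Iic, hF, hF]
  rcases le_total s t with h | h
  · exact key s t h
  · rw [abs_sub_comm, key t s h]
    congr 1; ext x; unfold DI; ring

section Moments

variable {Q : Measure (ℝ × ℝ)} [IsProbabilityMeasure Q]

lemma int_alpha (x : ℝ) : Integrable (fun p : ℝ × ℝ => eI x p.1) Q :=
  eI_integrable Q measurable_const measurable_fst

lemma int_beta (y : ℝ) : Integrable (fun p : ℝ × ℝ => eI y p.2) Q :=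
  eI_integrable Q measurable_const measurable_snd

lemma int_alphabeta (x y : ℝ) :
    Integrable (fun p : ℝ × ℝ => eI x p.1 * eI y p.2) Q :=
  int_of_bdd ((eI_meas measurable_const measurable_fst).mul
    (eI_meas measurable_const measurable_snd)) 1
    (fun p => unit_abs (unit_mul (eI_unit _ _) (eI_unit _ _)))

lemma moments (x y f g h : ℝ)
    (hS1 : ∫ p : ℝ × ℝ, eI x p.1 ∂Q = 1 - f)
    (hS2 : ∫ p : ℝ × ℝ, eI y p.2 ∂Q = 1 - g)
    (hM : ∫ p : ℝ × ℝ, eI x p.1 * eI y p.2 ∂Q = 1 - f - g + h) :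
    (∫ p : ℝ × ℝ, eI x p.1 * (1 - eI y p.2) ∂Q = g - h) ∧
    (∫ p : ℝ × ℝ, (1 - eI x p.1) * eI y p.2 ∂Q = f - h) ∧
    (∫ p : ℝ × ℝ, (1 - eI x p.1) * (1 - eI y p.2) ∂Q = h) ∧
    (∫ p : ℝ × ℝ, (1 - eI x p.1) ∂Q = f) ∧
    (∫ p : ℝ × ℝ, (1 - eI y p.2) ∂Q = g) := by
  have hone : ∫ _p : ℝ × ℝ, (1 : ℝ) ∂Q = 1 := by simp
  refine ⟨?_, ?_, ?_, ?_, ?_⟩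
  · have hpt : (fun p : ℝ × ℝ => eI x p.1 * (1 - eI y p.2))
        = fun p => eI x p.1 - eI x p.1 * eI y p.2 := by ext p; ring
    rw [hpt, integral_sub (int_alpha x) (int_alphabeta x y), hS1, hM]; ring
  · have hpt : (fun p : ℝ × ℝ => (1 - eI x p.1) * eI y p.2)
        = fun p => eI y p.2 - eI x p.1 * eI y p.2 := by ext p; ring
    rw [hpt, integral_sub (int_beta y) (int_alphabeta x y), hS2, hM]; ring
  · have hpt : (fun p : ℝ × ℝ => (1 - eI x p.1) * (1 - eI y p.2))
        = fun p => ((1 : ℝ) - eI x p.1 - eI y p.2) + eI x p.1 * eI y p.2 := by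
      ext p; ring
    have ia : Integrable (fun p : ℝ × ℝ => (1 : ℝ) - eI x p.1) Q :=
      (integrable_const 1).sub (int_alpha x)
    have ib : Integrable (fun p : ℝ × ℝ => (1 : ℝ) - eI x p.1 - eI y p.2) Q :=
      ia.sub (int_beta y)
    rw [hpt, integral_add ib (int_alphabeta x y), integral_sub ia (int_beta y),
      integral_sub (integrable_const 1) (int_alpha x), hone, hS1, hS2, hM]
    ring
  · rw [integral_sub (integrable_const 1) (int_alpha x), hone, hS1]; ring
  · rw [integral_sub (integrable_const 1) (int_beta y), hone, hS2]; ring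

lemma int_one_sub_alpha (x : ℝ) : Integrable (fun p : ℝ × ℝ => 1 - eI x p.1) Q :=
  (integrable_const 1).sub (int_alpha x)

lemma int_one_sub_beta (y : ℝ) : Integrable (fun p : ℝ × ℝ => 1 - eI y p.2) Q :=
  (integrable_const 1).sub (int_beta y)

lemma int_alpha_onesubbeta (x y : ℝ) :
    Integrable (fun p : ℝ × ℝ => eI x p.1 * (1 - eI y p.2)) Q :=
  int_of_bdd ((eI_meas measurable_const measurable_fst).mul
    (measurable_const.sub (eI_meas measurable_const measurable_snd))) 1
    (fun p => unit_abs (unit_mul (eI_unit _ _) (unit_one_sub (eI_unit _ _))))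

lemma int_onesubalpha_beta (x y : ℝ) :
    Integrable (fun p : ℝ × ℝ => (1 - eI x p.1) * eI y p.2) Q :=
  int_of_bdd ((measurable_const.sub (eI_meas measurable_const measurable_fst)).mul
    (eI_meas measurable_const measurable_snd)) 1
    (fun p => unit_abs (unit_mul (unit_one_sub (eI_unit _ _)) (eI_unit _ _)))

lemma int_onesubalpha_onesubbeta (x y : ℝ) :
    Integrable (fun p : ℝ × ℝ => (1 - eI x p.1) * (1 - eI y p.2)) Q :=
  int_of_bdd ((measurable_const.sub (eI_meas measurable_const measurable_fst)).mul
    (measurable_const.sub (eI_meas measurable_const measurable_snd))) 1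
    (fun p => unit_abs (unit_mul (unit_one_sub (eI_unit _ _)) (unit_one_sub (eI_unit _ _))))

lemma pair_integral (x y f g h : ℝ)
    (hS1 : ∫ p : ℝ × ℝ, eI x p.1 ∂Q = 1 - f)
    (hS2 : ∫ p : ℝ × ℝ, eI y p.2 ∂Q = 1 - g)
    (hM : ∫ p : ℝ × ℝ, eI x p.1 * eI y p.2 ∂Q = 1 - f - g + h) :
    ∫ p : (ℝ × ℝ) × (ℝ × ℝ), DI x p.1.1 p.2.1 * DI y p.1.2 p.2.2 ∂(Q.prod Q)
      = (1 - f - g + h) * h + (g - h) * (f - h) + (f - h) * (g - h)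
        + h * (1 - f - g + h) := by
  obtain ⟨h10, h01, h00, hcf, hcg⟩ := moments x y f g h hS1 hS2 hM
  have hexp : (fun p : (ℝ × ℝ) × (ℝ × ℝ) => DI x p.1.1 p.2.1 * DI y p.1.2 p.2.2)
      = fun p => (eI x p.1.1 * eI y p.1.2) * ((1 - eI x p.2.1) * (1 - eI y p.2.2))
        + ((eI x p.1.1 * (1 - eI y p.1.2)) * ((1 - eI x p.2.1) * eI y p.2.2)
        + (((1 - eI x p.1.1) * eI y p.1.2) * (eI x p.2.1 * (1 - eI y p.2.2))
        + ((1 - eI x p.1.1) * (1 - eI y p.1.2)) * (eI x p.2.1 * eI y p.2.2))) := by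
    ext p; simp only [DI]; ring
  have iT1 : Integrable (fun p : (ℝ × ℝ) × (ℝ × ℝ) =>
      (eI x p.1.1 * eI y p.1.2) * ((1 - eI x p.2.1) * (1 - eI y p.2.2))) (Q.prod Q) :=
    (int_alphabeta x y).mul_prod (int_onesubalpha_onesubbeta x y)
  have iT2 : Integrable (fun p : (ℝ × ℝ) × (ℝ × ℝ) =>
      (eI x p.1.1 * (1 - eI y p.1.2)) * ((1 - eI x p.2.1) * eI y p.2.2)) (Q.prod Q) :=
    (int_alpha_onesubbeta x y).mul_prod (int_onesubalpha_beta x y)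
  have iT3 : Integrable (fun p : (ℝ × ℝ) × (ℝ × ℝ) =>
      ((1 - eI x p.1.1) * eI y p.1.2) * (eI x p.2.1 * (1 - eI y p.2.2))) (Q.prod Q) :=
    (int_onesubalpha_beta x y).mul_prod (int_alpha_onesubbeta x y)
  have iT4 : Integrable (fun p : (ℝ × ℝ) × (ℝ × ℝ) =>
      ((1 - eI x p.1.1) * (1 - eI y p.1.2)) * (eI x p.2.1 * eI y p.2.2)) (Q.prod Q) :=
    (int_onesubalpha_onesubbeta x y).mul_prod (int_alphabeta x y)
  have iT34 : Integrable (fun p : (ℝ × ℝ) × (ℝ × ℝ) =>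
      ((1 - eI x p.1.1) * eI y p.1.2) * (eI x p.2.1 * (1 - eI y p.2.2))
        + ((1 - eI x p.1.1) * (1 - eI y p.1.2)) * (eI x p.2.1 * eI y p.2.2)) (Q.prod Q) :=
    iT3.add iT4
  have iT234 : Integrable (fun p : (ℝ × ℝ) × (ℝ × ℝ) =>
      (eI x p.1.1 * (1 - eI y p.1.2)) * ((1 - eI x p.2.1) * eI y p.2.2)
        + (((1 - eI x p.1.1) * eI y p.1.2) * (eI x p.2.1 * (1 - eI y p.2.2))
        + ((1 - eI x p.1.1) * (1 - eI y p.1.2)) * (eI x p.2.1 * eI y p.2.2))) (Q.prod Q) :=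
    iT2.add iT34
  rw [hexp, integral_add iT1 iT234, integral_add iT2 iT34, integral_add iT3 iT4,
    integral_prod_mul (f := fun r : ℝ × ℝ => eI x r.1 * eI y r.2)
      (g := fun r : ℝ × ℝ => (1 - eI x r.1) * (1 - eI y r.2)),
    integral_prod_mul (f := fun r : ℝ × ℝ => eI x r.1 * (1 - eI y r.2))
      (g := fun r : ℝ × ℝ => (1 - eI x r.1) * eI y r.2),
    integral_prod_mul (f := fun r : ℝ × ℝ => (1 - eI x r.1) * eI y r.2)
      (g := fun r : ℝ × ℝ => eI x r.1 * (1 - eI y r.2)),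
    integral_prod_mul (f := fun r : ℝ × ℝ => (1 - eI x r.1) * (1 - eI y r.2))
      (g := fun r : ℝ × ℝ => eI x r.1 * eI y r.2),
    hM, h00, h10, h01]
  ring

lemma triple_integral (x y f g h : ℝ)
    (hS1 : ∫ p : ℝ × ℝ, eI x p.1 ∂Q = 1 - f)
    (hS2 : ∫ p : ℝ × ℝ, eI y p.2 ∂Q = 1 - g)
    (hM : ∫ p : ℝ × ℝ, eI x p.1 * eI y p.2 ∂Q = 1 - f - g + h) :
    ∫ p : (ℝ × ℝ) × (ℝ × ℝ) × (ℝ × ℝ),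
        DI x p.1.1 p.2.1.1 * DI y p.1.2 p.2.2.2 ∂(Q.prod (Q.prod Q))
      = (1 - f - g + h) * (f * g) + (g - h) * (f * (1 - g))
        + (f - h) * ((1 - f) * g) + h * ((1 - f) * (1 - g)) := by
  obtain ⟨h10, h01, h00, hcf, hcg⟩ := moments x y f g h hS1 hS2 hM
  have hexp : (fun p : (ℝ × ℝ) × (ℝ × ℝ) × (ℝ × ℝ) =>
        DI x p.1.1 p.2.1.1 * DI y p.1.2 p.2.2.2)
      = fun p => (eI x p.1.1 * eI y p.1.2) * ((1 - eI x p.2.1.1) * (1 - eI y p.2.2.2))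
        + ((eI x p.1.1 * (1 - eI y p.1.2)) * ((1 - eI x p.2.1.1) * eI y p.2.2.2)
        + (((1 - eI x p.1.1) * eI y p.1.2) * (eI x p.2.1.1 * (1 - eI y p.2.2.2))
        + ((1 - eI x p.1.1) * (1 - eI y p.1.2)) * (eI x p.2.1.1 * eI y p.2.2.2))) := by
    ext p; simp only [DI]; ring
  have ju1 : Integrable (fun q : (ℝ × ℝ) × (ℝ × ℝ) => (1 - eI x q.1.1) * (1 - eI y q.2.2))
      (Q.prod Q) := (int_one_sub_alpha x).mul_prod (int_one_sub_beta y)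
  have ju2 : Integrable (fun q : (ℝ × ℝ) × (ℝ × ℝ) => (1 - eI x q.1.1) * eI y q.2.2)
      (Q.prod Q) := (int_one_sub_alpha x).mul_prod (int_beta y)
  have ju3 : Integrable (fun q : (ℝ × ℝ) × (ℝ × ℝ) => eI x q.1.1 * (1 - eI y q.2.2))
      (Q.prod Q) := (int_alpha x).mul_prod (int_one_sub_beta y)
  have ju4 : Integrable (fun q : (ℝ × ℝ) × (ℝ × ℝ) => eI x q.1.1 * eI y q.2.2)
      (Q.prod Q) := (int_alpha x).mul_prod (int_beta y)
  have iT1 : Integrable (fun p : (ℝ × ℝ) × (ℝ × ℝ) × (ℝ × ℝ) =>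
      (eI x p.1.1 * eI y p.1.2) * ((1 - eI x p.2.1.1) * (1 - eI y p.2.2.2)))
      (Q.prod (Q.prod Q)) := (int_alphabeta x y).mul_prod ju1
  have iT2 : Integrable (fun p : (ℝ × ℝ) × (ℝ × ℝ) × (ℝ × ℝ) =>
      (eI x p.1.1 * (1 - eI y p.1.2)) * ((1 - eI x p.2.1.1) * eI y p.2.2.2))
      (Q.prod (Q.prod Q)) := (int_alpha_onesubbeta x y).mul_prod ju2
  have iT3 : Integrable (fun p : (ℝ × ℝ) × (ℝ × ℝ) × (ℝ × ℝ) =>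
      ((1 - eI x p.1.1) * eI y p.1.2) * (eI x p.2.1.1 * (1 - eI y p.2.2.2)))
      (Q.prod (Q.prod Q)) := (int_onesubalpha_beta x y).mul_prod ju3
  have iT4 : Integrable (fun p : (ℝ × ℝ) × (ℝ × ℝ) × (ℝ × ℝ) =>
      ((1 - eI x p.1.1) * (1 - eI y p.1.2)) * (eI x p.2.1.1 * eI y p.2.2.2))
      (Q.prod (Q.prod Q)) := (int_onesubalpha_onesubbeta x y).mul_prod ju4
  have iT34 : Integrable (fun p : (ℝ × ℝ) × (ℝ × ℝ) × (ℝ × ℝ) =>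
      ((1 - eI x p.1.1) * eI y p.1.2) * (eI x p.2.1.1 * (1 - eI y p.2.2.2))
        + ((1 - eI x p.1.1) * (1 - eI y p.1.2)) * (eI x p.2.1.1 * eI y p.2.2.2))
      (Q.prod (Q.prod Q)) := iT3.add iT4
  have iT234 : Integrable (fun p : (ℝ × ℝ) × (ℝ × ℝ) × (ℝ × ℝ) =>
      (eI x p.1.1 * (1 - eI y p.1.2)) * ((1 - eI x p.2.1.1) * eI y p.2.2.2)
        + (((1 - eI x p.1.1) * eI y p.1.2) * (eI x p.2.1.1 * (1 - eI y p.2.2.2))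
        + ((1 - eI x p.1.1) * (1 - eI y p.1.2)) * (eI x p.2.1.1 * eI y p.2.2.2)))
      (Q.prod (Q.prod Q)) := iT2.add iT34
  rw [hexp, integral_add iT1 iT234, integral_add iT2 iT34, integral_add iT3 iT4,
    integral_prod_mul (f := fun r : ℝ × ℝ => eI x r.1 * eI y r.2)
      (g := fun q : (ℝ × ℝ) × (ℝ × ℝ) => (1 - eI x q.1.1) * (1 - eI y q.2.2)),
    integral_prod_mul (f := fun r : ℝ × ℝ => eI x r.1 * (1 - eI y r.2))
      (g := fun q : (ℝ × ℝ) × (ℝ × ℝ) => (1 - eI x q.1.1) * eI y q.2.2),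
    integral_prod_mul (f := fun r : ℝ × ℝ => (1 - eI x r.1) * eI y r.2)
      (g := fun q : (ℝ × ℝ) × (ℝ × ℝ) => eI x q.1.1 * (1 - eI y q.2.2)),
    integral_prod_mul (f := fun r : ℝ × ℝ => (1 - eI x r.1) * (1 - eI y r.2))
      (g := fun q : (ℝ × ℝ) × (ℝ × ℝ) => eI x q.1.1 * eI y q.2.2),
    integral_prod_mul (f := fun r : ℝ × ℝ => (1 : ℝ) - eI x r.1)
      (g := fun r : ℝ × ℝ => (1 : ℝ) - eI y r.2),
    integral_prod_mul (f := fun r : ℝ × ℝ => (1 : ℝ) - eI x r.1)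
      (g := fun r : ℝ × ℝ => eI y r.2),
    integral_prod_mul (f := fun r : ℝ × ℝ => eI x r.1)
      (g := fun r : ℝ × ℝ => (1 : ℝ) - eI y r.2),
    integral_prod_mul (f := fun r : ℝ × ℝ => eI x r.1)
      (g := fun r : ℝ × ℝ => eI y r.2),
    hM, h10, h01, h00, hcf, hcg, hS1, hS2]
  ring

lemma single_pair (μ : Measure ℝ) [IsProbabilityMeasure μ] (x f : ℝ)
    (hS : ∫ s, eI x s ∂μ = 1 - f) :
    ∫ q : ℝ × ℝ, DI x q.1 q.2 ∂(μ.prod μ) = (1 - f) * f + f * (1 - f) := by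
  have i1 : Integrable (fun s : ℝ => eI x s) μ :=
    eI_integrable μ measurable_const measurable_id
  have hSc : ∫ s, (1 : ℝ) - eI x s ∂μ = f := by
    rw [integral_sub (integrable_const 1) i1, hS]
    simp
  have hexp : (fun q : ℝ × ℝ => DI x q.1 q.2)
      = fun q => eI x q.1 * (1 - eI x q.2) + (1 - eI x q.1) * eI x q.2 := by
    ext q; simp only [DI]; ring
  have i2 : Integrable (fun s : ℝ => (1 : ℝ) - eI x s) μ := (integrable_const 1).sub i1
  rw [hexp, integral_add (i1.mul_prod i2) (i2.mul_prod i1),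
    integral_prod_mul (f := fun s : ℝ => eI x s) (g := fun s : ℝ => (1 : ℝ) - eI x s),
    integral_prod_mul (f := fun s : ℝ => (1 : ℝ) - eI x s) (g := fun s : ℝ => eI x s),
    hS, hSc]

end Moments

section Terms

variable (Q : Measure (ℝ × ℝ)) [IsProbabilityMeasure Q]
variable (μ L : Measure ℝ) [IsProbabilityMeasure μ] [IsProbabilityMeasure L]
variable {F G : ℝ → ℝ}

lemma term_pair (hFrep : ∀ s t : ℝ, |F s - F t| = ∫ x, DI x s t ∂μ)
    (hGrep : ∀ s t : ℝ, |G s - G t| = ∫ y, DI y s t ∂L) :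
    ∫ p : (ℝ × ℝ) × (ℝ × ℝ), |F p.1.1 - F p.2.1| * |G p.1.2 - G p.2.2| ∂(Q.prod Q)
      = ∫ z : ℝ × ℝ, (∫ p : (ℝ × ℝ) × (ℝ × ℝ),
          DI z.1 p.1.1 p.2.1 * DI z.2 p.1.2 p.2.2 ∂(Q.prod Q)) ∂(μ.prod L) := by
  have hpt : ∀ p : (ℝ × ℝ) × (ℝ × ℝ), |F p.1.1 - F p.2.1| * |G p.1.2 - G p.2.2|
      = ∫ z : ℝ × ℝ, DI z.1 p.1.1 p.2.1 * DI z.2 p.1.2 p.2.2 ∂(μ.prod L) := by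
    intro p
    rw [hFrep, hGrep,
      ← integral_prod_mul (f := fun x => DI x p.1.1 p.2.1) (g := fun y => DI y p.1.2 p.2.2)]
  have hint : Integrable (Function.uncurry fun (p : (ℝ × ℝ) × (ℝ × ℝ)) (z : ℝ × ℝ) =>
      DI z.1 p.1.1 p.2.1 * DI z.2 p.1.2 p.2.2) ((Q.prod Q).prod (μ.prod L)) := by
    apply int_of_bdd ((DI_meas measurable_snd.fst measurable_fst.fst.fst
        measurable_fst.snd.fst).mul (DI_meas measurable_snd.snd measurable_fst.fst.snd
        measurable_fst.snd.snd)) 1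
    intro a
    exact unit_abs (unit_mul (DI_unit _ _ _) (DI_unit _ _ _))
  rw [integral_congr_ae (Eventually.of_forall hpt)]
  exact integral_integral_swap hint

lemma term_triple (hFrep : ∀ s t : ℝ, |F s - F t| = ∫ x, DI x s t ∂μ)
    (hGrep : ∀ s t : ℝ, |G s - G t| = ∫ y, DI y s t ∂L) :
    ∫ p : (ℝ × ℝ) × (ℝ × ℝ) × (ℝ × ℝ),
        |F p.1.1 - F p.2.1.1| * |G p.1.2 - G p.2.2.2| ∂(Q.prod (Q.prod Q))
      = ∫ z : ℝ × ℝ, (∫ p : (ℝ × ℝ) × (ℝ × ℝ) × (ℝ × ℝ),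
          DI z.1 p.1.1 p.2.1.1 * DI z.2 p.1.2 p.2.2.2 ∂(Q.prod (Q.prod Q))) ∂(μ.prod L) := by
  have hpt : ∀ p : (ℝ × ℝ) × (ℝ × ℝ) × (ℝ × ℝ), |F p.1.1 - F p.2.1.1| * |G p.1.2 - G p.2.2.2|
      = ∫ z : ℝ × ℝ, DI z.1 p.1.1 p.2.1.1 * DI z.2 p.1.2 p.2.2.2 ∂(μ.prod L) := by
    intro p
    rw [hFrep, hGrep, ← integral_prod_mul (f := fun x => DI x p.1.1 p.2.1.1)
      (g := fun y => DI y p.1.2 p.2.2.2)]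
  have hint : Integrable (Function.uncurry
      fun (p : (ℝ × ℝ) × (ℝ × ℝ) × (ℝ × ℝ)) (z : ℝ × ℝ) =>
      DI z.1 p.1.1 p.2.1.1 * DI z.2 p.1.2 p.2.2.2) ((Q.prod (Q.prod Q)).prod (μ.prod L)) := by
    apply int_of_bdd ((DI_meas measurable_snd.fst measurable_fst.fst.fst
        measurable_fst.snd.fst.fst).mul (DI_meas measurable_snd.snd measurable_fst.fst.snd
        measurable_fst.snd.snd.snd)) 1
    intro a
    exact unit_abs (unit_mul (DI_unit _ _ _) (DI_unit _ _ _))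
  rw [integral_congr_ae (Eventually.of_forall hpt)]
  exact integral_integral_swap hint

lemma term_single (hFrep : ∀ s t : ℝ, |F s - F t| = ∫ x, DI x s t ∂μ) :
    ∫ q : ℝ × ℝ, |F q.1 - F q.2| ∂(μ.prod μ)
      = ∫ x, (∫ q : ℝ × ℝ, DI x q.1 q.2 ∂(μ.prod μ)) ∂μ := by
  have hpt : ∀ q : ℝ × ℝ, |F q.1 - F q.2| = ∫ x, DI x q.1 q.2 ∂μ := fun q => hFrep q.1 q.2
  have hint : Integrable (Function.uncurry fun (q : ℝ × ℝ) (x : ℝ) => DI x q.1 q.2)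
      ((μ.prod μ).prod μ) := by
    apply int_of_bdd (DI_meas measurable_snd measurable_fst.fst measurable_fst.snd) 1
    intro a
    exact unit_abs (DI_unit _ _ _)
  rw [integral_congr_ae (Eventually.of_forall hpt)]
  exact integral_integral_swap hint

end Terms

end Stmt9Aux

namespace Stmt9Aux

lemma eI_swap {x s : ℝ} (h : s ≠ x) : eI x s = 1 - eI s x := by
  unfold eI
  rcases lt_trichotomy s x with h1 | h1 | h1
  · rw [if_neg (not_le.2 h1), if_pos h1.le]; norm_num
  · exact absurd h1 h
  · rw [if_pos h1.le, if_neg (not_le.2 h1)]; norm_num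

lemma tail_prob {Ω : Type*} [MeasurableSpace Ω] (P : Measure Ω) [IsProbabilityMeasure P]
    {X : Ω → ℝ} (hX : Measurable X) (hz : ∀ x : ℝ, P {ω | X ω = x} = 0) (x : ℝ) :
    (P {ω | x ≤ X ω}).toReal = 1 - (P {ω | X ω ≤ x}).toReal := by
  have hss : {ω | x ≤ X ω} = {ω | X ω < x}ᶜ := by ext ω; simp [not_lt]
  have hmlt : MeasurableSet {ω | X ω < x} := measurableSet_lt hX measurable_const
  have hle : P {ω | X ω < x} = P {ω | X ω ≤ x} := by
    refine le_antisymm (measure_mono fun ω (h : X ω < x) => le_of_lt h) ?_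
    calc P {ω | X ω ≤ x} ≤ P ({ω | X ω < x} ∪ {ω | X ω = x}) :=
          measure_mono (fun ω (h : X ω ≤ x) => lt_or_eq_of_le h)
      _ ≤ P {ω | X ω < x} + P {ω | X ω = x} := measure_union_le _ _
      _ = P {ω | X ω < x} := by rw [hz x, add_zero]
  rw [hss, measure_compl hmlt (measure_ne_top P _), measure_univ, hle,
    ENNReal.toReal_sub_of_le prob_le_one ENNReal.one_ne_top, ENNReal.toReal_one]

end Stmt9Aux

open Stmt9Aux

/-- Equivalence of the population rank distance covariance with the modified Hoeffding
functional in one dimension: for `(X,Y)` with absolutely continuous marginal distribution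
functions `F, G` and joint distribution function `F^{X,Y}`,
`RdCov²(X,Y) = 4 ∫∫ (F^{X,Y}(x,y) − F(x)G(y))² dF(x) dG(y)`. -/
theorem stmt9
    {Ω : Type*} [MeasurableSpace Ω] (P : Measure Ω) [IsProbabilityMeasure P]
    (X Y : Ω → ℝ) (hX : Measurable X) (hY : Measurable Y)
    (hacX : Measure.map X P ≪ volume) (hacY : Measure.map Y P ≪ volume)
    (F G : ℝ → ℝ) (Fxy : ℝ → ℝ → ℝ)
    (hF : ∀ x, F x = (P {ω | X ω ≤ x}).toReal)
    (hG : ∀ y, G y = (P {ω | Y ω ≤ y}).toReal)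
    (hFxy : ∀ x y, Fxy x y = (P {ω | X ω ≤ x ∧ Y ω ≤ y}).toReal)
    (ν : Measure (ℝ × ℝ)) (hν : ν = Measure.map (fun ω => (X ω, Y ω)) P) :
    (∫ p : (ℝ × ℝ) × (ℝ × ℝ), |F p.1.1 - F p.2.1| * |G p.1.2 - G p.2.2| ∂ ν.prod ν)
      + (∫ q : ℝ × ℝ, |F q.1 - F q.2| ∂ (Measure.map X P).prod (Measure.map X P))
        * (∫ q : ℝ × ℝ, |G q.1 - G q.2| ∂ (Measure.map Y P).prod (Measure.map Y P))
      - 2 * (∫ p : (ℝ × ℝ) × (ℝ × ℝ) × (ℝ × ℝ),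
          |F p.1.1 - F p.2.1.1| * |G p.1.2 - G p.2.2.2| ∂ ν.prod (ν.prod ν))
    = 4 * ∫ q : ℝ × ℝ, (Fxy q.1 q.2 - F q.1 * G q.2) ^ 2
        ∂ (Measure.map X P).prod (Measure.map Y P) := by
  have hpm : Measurable fun ω => (X ω, Y ω) := hX.prodMk hY
  haveI iP1 : IsProbabilityMeasure (Measure.map (fun ω => (X ω, Y ω)) P) :=
    Measure.isProbabilityMeasure_map hpm.aemeasurable
  haveI iP2 : IsProbabilityMeasure (Measure.map X P) :=
    Measure.isProbabilityMeasure_map hX.aemeasurable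
  haveI iP3 : IsProbabilityMeasure (Measure.map Y P) :=
    Measure.isProbabilityMeasure_map hY.aemeasurable
  haveI iP4 : IsProbabilityMeasure ν := hν ▸ iP1
  -- no atoms
  have hzX : ∀ x : ℝ, P {ω | X ω = x} = 0 := by
    intro x
    have h1 : Measure.map X P {x} = 0 := hacX (measure_singleton x)
    rw [Measure.map_apply hX (measurableSet_singleton x)] at h1
    have h2 : X ⁻¹' {x} = {ω | X ω = x} := by ext ω; simp
    rwa [h2] at h1
  have hzY : ∀ y : ℝ, P {ω | Y ω = y} = 0 := by
    intro y
    have h1 : Measure.map Y P {y} = 0 := hacY (measure_singleton y)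
    rw [Measure.map_apply hY (measurableSet_singleton y)] at h1
    have h2 : Y ⁻¹' {y} = {ω | Y ω = y} := by ext ω; simp
    rwa [h2] at h1
  -- cdf representations
  have hFμ : ∀ x, F x = (Measure.map X P (Set.Iic x)).toReal := by
    intro x
    have h2 : X ⁻¹' Set.Iic x = {ω | X ω ≤ x} := by ext ω; simp
    rw [Measure.map_apply hX measurableSet_Iic, h2, hF x]
  have hGL : ∀ y, G y = (Measure.map Y P (Set.Iic y)).toReal := by
    intro y
    have h2 : Y ⁻¹' Set.Iic y = {ω | Y ω ≤ y} := by ext ω; simp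
    rw [Measure.map_apply hY measurableSet_Iic, h2, hG y]
  have hFrep : ∀ s t : ℝ, |F s - F t| = ∫ x, DI x s t ∂(Measure.map X P) :=
    abs_cdf _ F hFμ
  have hGrep : ∀ s t : ℝ, |G s - G t| = ∫ y, DI y s t ∂(Measure.map Y P) :=
    abs_cdf _ G hGL
  -- P-side moments
  have hPX : ∀ x : ℝ, ∫ ω, eI x (X ω) ∂P = 1 - F x := by
    intro x
    have hpt : (fun ω => eI x (X ω)) = fun ω => if ω ∈ {ω | x ≤ X ω} then (1 : ℝ) else 0 := by
      ext ω; by_cases hc : x ≤ X ω <;> simp [eI, hc]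
    rw [hpt, integral_ite P (measurableSet_le measurable_const hX), tail_prob P hX hzX x,
      hF x]
  have hPY : ∀ y : ℝ, ∫ ω, eI y (Y ω) ∂P = 1 - G y := by
    intro y
    have hpt : (fun ω => eI y (Y ω)) = fun ω => if ω ∈ {ω | y ≤ Y ω} then (1 : ℝ) else 0 := by
      ext ω; by_cases hc : y ≤ Y ω <;> simp [eI, hc]
    rw [hpt, integral_ite P (measurableSet_le measurable_const hY), tail_prob P hY hzY y,
      hG y]
  -- ν-moments
  have hS1 : ∀ x : ℝ, ∫ p : ℝ × ℝ, eI x p.1 ∂ν = 1 - F x := by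
    intro x
    rw [hν, integral_map hpm.aemeasurable
      (eI_meas measurable_const measurable_fst).aestronglyMeasurable]
    exact hPX x
  have hS2 : ∀ y : ℝ, ∫ p : ℝ × ℝ, eI y p.2 ∂ν = 1 - G y := by
    intro y
    rw [hν, integral_map hpm.aemeasurable
      (eI_meas measurable_const measurable_snd).aestronglyMeasurable]
    exact hPY y
  have hSμ : ∀ x : ℝ, ∫ s, eI x s ∂(Measure.map X P) = 1 - F x := by
    intro x
    rw [integral_map hX.aemeasurable (eI_meas_id x).aestronglyMeasurable]
    exact hPX x
  have hSL : ∀ y : ℝ, ∫ s, eI y s ∂(Measure.map Y P) = 1 - G y := by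
    intro y
    rw [integral_map hY.aemeasurable (eI_meas_id y).aestronglyMeasurable]
    exact hPY y
  have hM : ∀ x y : ℝ, ∫ p : ℝ × ℝ, eI x p.1 * eI y p.2 ∂ν
      = 1 - F x - G y + Fxy x y := by
    intro x y
    rw [hν, integral_map (f := fun p : ℝ × ℝ => eI x p.1 * eI y p.2) hpm.aemeasurable
      (((eI_meas measurable_const measurable_fst).mul
        (eI_meas measurable_const measurable_snd)).aestronglyMeasurable)]
    show ∫ ω, eI x (X ω) * eI y (Y ω) ∂P = _
    have hae1 : ∀ᵐ ω ∂P, X ω ≠ x := by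
      rw [ae_iff]
      have h2 : {ω | ¬ X ω ≠ x} = {ω | X ω = x} := by ext ω; simp
      rw [h2]; exact hzX x
    have hae2 : ∀ᵐ ω ∂P, Y ω ≠ y := by
      rw [ae_iff]
      have h2 : {ω | ¬ Y ω ≠ y} = {ω | Y ω = y} := by ext ω; simp
      rw [h2]; exact hzY y
    have hcong : (fun ω => eI x (X ω) * eI y (Y ω)) =ᵐ[P]
        fun ω => (1 : ℝ) - eI (X ω) x - eI (Y ω) y + eI (X ω) x * eI (Y ω) y := by
      filter_upwards [hae1, hae2] with ω h1 h2
      rw [eI_swap h1, eI_swap h2]; ring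
    rw [integral_congr_ae hcong]
    have iX : Integrable (fun ω => eI (X ω) x) P := eI_integrable P hX measurable_const
    have iY : Integrable (fun ω => eI (Y ω) y) P := eI_integrable P hY measurable_const
    have iXY : Integrable (fun ω => eI (X ω) x * eI (Y ω) y) P :=
      int_of_bdd ((eI_meas hX measurable_const).mul (eI_meas hY measurable_const)) 1
        (fun ω => unit_abs (unit_mul (eI_unit _ _) (eI_unit _ _)))
    have ia : Integrable (fun ω => (1 : ℝ) - eI (X ω) x) P := (integrable_const 1).sub iX
    have ib : Integrable (fun ω => (1 : ℝ) - eI (X ω) x - eI (Y ω) y) P := ia.sub iY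
    have vX : ∫ ω, eI (X ω) x ∂P = F x := by
      have hpt : (fun ω => eI (X ω) x)
          = fun ω => if ω ∈ {ω | X ω ≤ x} then (1 : ℝ) else 0 := by
        ext ω; by_cases hc : X ω ≤ x <;> simp [eI, hc]
      rw [hpt, integral_ite P (measurableSet_le hX measurable_const), hF x]
    have vY : ∫ ω, eI (Y ω) y ∂P = G y := by
      have hpt : (fun ω => eI (Y ω) y)
          = fun ω => if ω ∈ {ω | Y ω ≤ y} then (1 : ℝ) else 0 := by
        ext ω; by_cases hc : Y ω ≤ y <;> simp [eI, hc]
      rw [hpt, integral_ite P (measurableSet_le hY measurable_const), hG y]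
    have vXY : ∫ ω, eI (X ω) x * eI (Y ω) y ∂P = Fxy x y := by
      have hpt : (fun ω => eI (X ω) x * eI (Y ω) y)
          = fun ω => Set.indicator {ω | X ω ≤ x ∧ Y ω ≤ y} 1 ω := by
        ext ω
        by_cases h1 : X ω ≤ x <;> by_cases h2 : Y ω ≤ y <;>
          simp [eI, Set.indicator_apply, Set.mem_setOf_eq, h1, h2]
      have hms : MeasurableSet {ω | X ω ≤ x ∧ Y ω ≤ y} :=
        (measurableSet_le hX measurable_const).inter (measurableSet_le hY measurable_const)
      rw [hpt, integral_indicator_one hms, hFxy x y]; rfl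
    have hone : ∫ _ω : Ω, (1 : ℝ) ∂P = 1 := by simp
    rw [integral_add ib iXY, integral_sub ia iY, integral_sub (integrable_const 1) iX,
      hone, vX, vY, vXY]
  -- the three terms
  have hT1 : (∫ p : (ℝ × ℝ) × (ℝ × ℝ), |F p.1.1 - F p.2.1| * |G p.1.2 - G p.2.2| ∂ν.prod ν)
      = ∫ z : ℝ × ℝ, ((1 - F z.1 - G z.2 + Fxy z.1 z.2) * Fxy z.1 z.2
          + (G z.2 - Fxy z.1 z.2) * (F z.1 - Fxy z.1 z.2)
          + (F z.1 - Fxy z.1 z.2) * (G z.2 - Fxy z.1 z.2)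
          + Fxy z.1 z.2 * (1 - F z.1 - G z.2 + Fxy z.1 z.2))
        ∂((Measure.map X P).prod (Measure.map Y P)) := by
    rw [term_pair ν (Measure.map X P) (Measure.map Y P) hFrep hGrep]
    refine integral_congr_ae (Eventually.of_forall fun z => ?_)
    exact pair_integral z.1 z.2 (F z.1) (G z.2) (Fxy z.1 z.2) (hS1 z.1) (hS2 z.2)
      (hM z.1 z.2)
  have hT3 : (∫ p : (ℝ × ℝ) × (ℝ × ℝ) × (ℝ × ℝ),
        |F p.1.1 - F p.2.1.1| * |G p.1.2 - G p.2.2.2| ∂ν.prod (ν.prod ν))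
      = ∫ z : ℝ × ℝ, ((1 - F z.1 - G z.2 + Fxy z.1 z.2) * (F z.1 * G z.2)
          + (G z.2 - Fxy z.1 z.2) * (F z.1 * (1 - G z.2))
          + (F z.1 - Fxy z.1 z.2) * ((1 - F z.1) * G z.2)
          + Fxy z.1 z.2 * ((1 - F z.1) * (1 - G z.2)))
        ∂((Measure.map X P).prod (Measure.map Y P)) := by
    rw [term_triple ν (Measure.map X P) (Measure.map Y P) hFrep hGrep]
    refine integral_congr_ae (Eventually.of_forall fun z => ?_)
    exact triple_integral z.1 z.2 (F z.1) (G z.2) (Fxy z.1 z.2) (hS1 z.1) (hS2 z.2)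
      (hM z.1 z.2)
  have hEF : (∫ q : ℝ × ℝ, |F q.1 - F q.2| ∂(Measure.map X P).prod (Measure.map X P))
      = ∫ x, ((1 - F x) * F x + F x * (1 - F x)) ∂(Measure.map X P) := by
    rw [term_single (Measure.map X P) hFrep]
    refine integral_congr_ae (Eventually.of_forall fun x => ?_)
    exact single_pair _ x (F x) (hSμ x)
  have hEG : (∫ q : ℝ × ℝ, |G q.1 - G q.2| ∂(Measure.map Y P).prod (Measure.map Y P))
      = ∫ y, ((1 - G y) * G y + G y * (1 - G y)) ∂(Measure.map Y P) := by
    rw [term_single (Measure.map Y P) hGrep]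
    refine integral_congr_ae (Eventually.of_forall fun y => ?_)
    exact single_pair _ y (G y) (hSL y)
  have hT2 : (∫ q : ℝ × ℝ, |F q.1 - F q.2| ∂(Measure.map X P).prod (Measure.map X P))
        * (∫ q : ℝ × ℝ, |G q.1 - G q.2| ∂(Measure.map Y P).prod (Measure.map Y P))
      = ∫ z : ℝ × ℝ, ((1 - F z.1) * F z.1 + F z.1 * (1 - F z.1))
          * ((1 - G z.2) * G z.2 + G z.2 * (1 - G z.2))
        ∂((Measure.map X P).prod (Measure.map Y P)) := by
    rw [hEF, hEG, ← integral_prod_mul (f := fun x => (1 - F x) * F x + F x * (1 - F x))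
      (g := fun y => (1 - G y) * G y + G y * (1 - G y))]
  -- integrability of the three integrands
  have hint1 : Integrable (Function.uncurry fun (z : ℝ × ℝ) (p : (ℝ × ℝ) × (ℝ × ℝ)) =>
      DI z.1 p.1.1 p.2.1 * DI z.2 p.1.2 p.2.2)
      (((Measure.map X P).prod (Measure.map Y P)).prod (ν.prod ν)) := by
    apply int_of_bdd ((DI_meas measurable_fst.fst measurable_snd.fst.fst
        measurable_snd.snd.fst).mul (DI_meas measurable_fst.snd measurable_snd.fst.snd
        measurable_snd.snd.snd)) 1
    intro a
    exact unit_abs (unit_mul (DI_unit _ _ _) (DI_unit _ _ _))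
  have ie1 : Integrable (fun z : ℝ × ℝ => (1 - F z.1 - G z.2 + Fxy z.1 z.2) * Fxy z.1 z.2
      + (G z.2 - Fxy z.1 z.2) * (F z.1 - Fxy z.1 z.2)
      + (F z.1 - Fxy z.1 z.2) * (G z.2 - Fxy z.1 z.2)
      + Fxy z.1 z.2 * (1 - F z.1 - G z.2 + Fxy z.1 z.2))
      ((Measure.map X P).prod (Measure.map Y P)) := by
    refine (hint1.integral_prod_left).congr (Eventually.of_forall fun z => ?_)
    exact pair_integral z.1 z.2 (F z.1) (G z.2) (Fxy z.1 z.2) (hS1 z.1) (hS2 z.2)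
      (hM z.1 z.2)
  have hint3 : Integrable (Function.uncurry
      fun (z : ℝ × ℝ) (p : (ℝ × ℝ) × (ℝ × ℝ) × (ℝ × ℝ)) =>
      DI z.1 p.1.1 p.2.1.1 * DI z.2 p.1.2 p.2.2.2)
      (((Measure.map X P).prod (Measure.map Y P)).prod (ν.prod (ν.prod ν))) := by
    apply int_of_bdd ((DI_meas measurable_fst.fst measurable_snd.fst.fst
        measurable_snd.snd.fst.fst).mul (DI_meas measurable_fst.snd measurable_snd.fst.snd
        measurable_snd.snd.snd.snd)) 1
    intro a
    exact unit_abs (unit_mul (DI_unit _ _ _) (DI_unit _ _ _))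
  have ie3 : Integrable (fun z : ℝ × ℝ => (1 - F z.1 - G z.2 + Fxy z.1 z.2) * (F z.1 * G z.2)
      + (G z.2 - Fxy z.1 z.2) * (F z.1 * (1 - G z.2))
      + (F z.1 - Fxy z.1 z.2) * ((1 - F z.1) * G z.2)
      + Fxy z.1 z.2 * ((1 - F z.1) * (1 - G z.2)))
      ((Measure.map X P).prod (Measure.map Y P)) := by
    refine (hint3.integral_prod_left).congr (Eventually.of_forall fun z => ?_)
    exact triple_integral z.1 z.2 (F z.1) (G z.2) (Fxy z.1 z.2) (hS1 z.1) (hS2 z.2)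
      (hM z.1 z.2)
  have hintF : Integrable (Function.uncurry fun (x : ℝ) (q : ℝ × ℝ) => DI x q.1 q.2)
      ((Measure.map X P).prod ((Measure.map X P).prod (Measure.map X P))) := by
    apply int_of_bdd (DI_meas measurable_fst measurable_snd.fst measurable_snd.snd) 1
    intro a
    exact unit_abs (DI_unit _ _ _)
  have hintG : Integrable (Function.uncurry fun (y : ℝ) (q : ℝ × ℝ) => DI y q.1 q.2)
      ((Measure.map Y P).prod ((Measure.map Y P).prod (Measure.map Y P))) := by
    apply int_of_bdd (DI_meas measurable_fst measurable_snd.fst measurable_snd.snd) 1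
    intro a
    exact unit_abs (DI_unit _ _ _)
  have iφ : Integrable (fun x : ℝ => (1 - F x) * F x + F x * (1 - F x))
      (Measure.map X P) := by
    refine (hintF.integral_prod_left).congr (Eventually.of_forall fun x => ?_)
    exact single_pair _ x (F x) (hSμ x)
  have iψ : Integrable (fun y : ℝ => (1 - G y) * G y + G y * (1 - G y))
      (Measure.map Y P) := by
    refine (hintG.integral_prod_left).congr (Eventually.of_forall fun y => ?_)
    exact single_pair _ y (G y) (hSL y)
  have ie2 : Integrable (fun z : ℝ × ℝ => ((1 - F z.1) * F z.1 + F z.1 * (1 - F z.1))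
      * ((1 - G z.2) * G z.2 + G z.2 * (1 - G z.2)))
      ((Measure.map X P).prod (Measure.map Y P)) := iφ.mul_prod iψ
  have ie12 : Integrable (fun z : ℝ × ℝ =>
      ((1 - F z.1 - G z.2 + Fxy z.1 z.2) * Fxy z.1 z.2
        + (G z.2 - Fxy z.1 z.2) * (F z.1 - Fxy z.1 z.2)
        + (F z.1 - Fxy z.1 z.2) * (G z.2 - Fxy z.1 z.2)
        + Fxy z.1 z.2 * (1 - F z.1 - G z.2 + Fxy z.1 z.2))
      + ((1 - F z.1) * F z.1 + F z.1 * (1 - F z.1))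
          * ((1 - G z.2) * G z.2 + G z.2 * (1 - G z.2)))
      ((Measure.map X P).prod (Measure.map Y P)) := ie1.add ie2
  have ie3' : Integrable (fun z : ℝ × ℝ =>
      2 * ((1 - F z.1 - G z.2 + Fxy z.1 z.2) * (F z.1 * G z.2)
        + (G z.2 - Fxy z.1 z.2) * (F z.1 * (1 - G z.2))
        + (F z.1 - Fxy z.1 z.2) * ((1 - F z.1) * G z.2)
        + Fxy z.1 z.2 * ((1 - F z.1) * (1 - G z.2))))
      ((Measure.map X P).prod (Measure.map Y P)) := ie3.const_mul 2
  rw [hT1, hT2, hT3, ← integral_add ie1 ie2, ← integral_const_mul 2, ← integral_sub ie12 ie3',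
    ← integral_const_mul 4]
  refine integral_congr_ae (Eventually.of_forall fun z => ?_)
  ring

end
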